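/- For the complete generalised h-vector: h(CCD·pt) = ⟨1,2⟩ + ⟨0,1⟩·w_{0;0} and h(CDC·pt) = ⟨1,2⟩ + w_{0;1}; consequently for v with h(v)=w_{0;0} (namely v=(CD−DC)·pt) one has h(Cv)=⟨0,1⟩w_{0;0} − w_{0;1}. -/
import Mathlib


open MvPolynomial

noncomputable section

/-- Polynomials in two variables x, y over ℚ (values of (flag-)h-vectors). -/
abbrev R2 : Type := MvPolynomial (Fin 2) ℚ

def px : R2 := X 0
def py : R2 := X 1

/-- Keys `k = ((d₁,…,d_r),(c₁,…,c_r))` indexing the formal symbols `w_k`. -/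
abbrev Key : Type := List ℕ × List ℕ

/-- The module of keyed polynomials `Σ_k p_k w_k`. -/
abbrev KMod : Type := Key →₀ R2

/-- The formal symbol `w_k`. -/
def wsym (k : Key) : KMod := Finsupp.single k 1

/-- `⟨j⟩ = y^j + x y^(j-1) + ⋯ + x^j`. -/
def br (j : ℕ) : R2 := ∑ t ∈ Finset.range (j + 1), px ^ t * py ^ (j - t)

/-- `⟨i,j⟩ = (xy)^i ⟨j⟩`. -/
def brr (i j : ℕ) : R2 := (px * py) ^ i * br j

/-- degree of a key: `2 Σ dᵢ + Σ cᵢ + 3r`. -/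
def degKey (k : Key) : ℕ := 2 * k.1.sum + k.2.sum + 3 * k.1.length

/-- for the complete generalised h-vector,
`h(CCD·pt) = ⟨1,2⟩ + ⟨0,1⟩·w_{0;0}` and `h(CDC·pt) = ⟨1,2⟩ + w_{0;1}`;
consequently for `v = (CD - DC)·pt`, which has `h(v) = w_{0;0}`, one gets
`h(Cv) = ⟨0,1⟩·w_{0;0} - w_{0;1}`. -/
theorem stmt10 {V : Type} [AddCommGroup V] [Module ℚ V]
    (Cop Dop : V →ₗ[ℚ] V) (ptv : V)
    (h g : V →ₗ[ℚ] KMod)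
    (hpt : h ptv = wsym ([], []))
    (gpt : g ptv = py • wsym ([], []))
    (hC : ∀ v : V, h (Cop v) = g v + px • h v)
    (hD : ∀ v : V, h (Dop v) = (px * py) • h v)
    (gC : ∀ v : V, g (Cop v) = py • g v)
    (gD : ∀ (v : V) (i j : ℕ) (k : Key), h v = brr i j • wsym k →
      g (Dop v) = ((px * py) ^ (i + 1) * py ^ (j + 1)) • wsym k
        + wsym (i :: k.1, j :: k.2)) :
    h (Cop (Cop (Dop ptv))) = brr 1 2 • wsym ([], []) + brr 0 1 • wsym ([0], [0])
    ∧ h (Cop (Dop (Cop ptv))) = brr 1 2 • wsym ([], []) + wsym ([0], [1])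
    ∧ h (Cop (Cop (Dop ptv) - Dop (Cop ptv)))
        = brr 0 1 • wsym ([0], [0]) - wsym ([0], [1]) := by
  -- concrete values of brackets
  have b00 : brr 0 0 = 1 := by simp [brr, br]
  have b01 : brr 0 1 = py + px := by
    simp [brr, br, Finset.sum_range_succ]
  have b12 : brr 1 2 = px * py * (py ^ 2 + px * py + px ^ 2) := by
    simp [brr, br, Finset.sum_range_succ]
  have hCpt : h (Cop ptv) = (py + px) • wsym ([], []) := by
    rw [hC, gpt, hpt, add_smul]
  have hDpt : h (Dop ptv) = (px * py) • wsym ([], []) := by rw [hD, hpt]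
  have gDpt : g (Dop ptv) = ((px * py) * py) • wsym ([], []) + wsym ([0], [0]) := by
    have := gD ptv 0 0 ([], []) (by rw [hpt, b00, one_smul])
    simpa using this
  have hCDpt : h (Cop (Dop ptv))
      = ((px * py) * py + px * (px * py)) • wsym ([], []) + wsym ([0], [0]) := by
    rw [hC, gDpt, hDpt]
    module
  have gCDpt : g (Cop (Dop ptv))
      = (py * ((px * py) * py)) • wsym ([], []) + py • wsym ([0], [0]) := by
    rw [gC, gDpt, smul_add, smul_smul]
  have e1 : h (Cop (Cop (Dop ptv))) = brr 1 2 • wsym ([], []) + brr 0 1 • wsym ([0], [0]) := by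
    rw [hC, gCDpt, hCDpt, b12, b01]
    module
  have gDCpt : g (Dop (Cop ptv)) = ((px * py) * py ^ 2) • wsym ([], []) + wsym ([0], [1]) := by
    have := gD (Cop ptv) 0 1 ([], []) (by rw [hCpt, b01])
    simpa using this
  have hDCpt : h (Dop (Cop ptv)) = ((px * py) * (py + px)) • wsym ([], []) := by
    rw [hD, hCpt, smul_smul]
  have e2 : h (Cop (Dop (Cop ptv))) = brr 1 2 • wsym ([], []) + wsym ([0], [1]) := by
    rw [hC, gDCpt, hDCpt, b12]
    module
  refine ⟨e1, e2, ?_⟩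
  rw [map_sub, map_sub, e1, e2, b12, b01]
  abel
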